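/- Let q be a prime power, δ ∈ F_{q^2} with δ^{q+1} = 1, s(x) = x^q + δx, and m ≥ 1 an integer. Let L be a rank 2 linearized polynomial of F_{q^2} that maps the kernel of s into the one-dimensional F_q-subspace of F_{q^2} containing the image of the map x ↦ s(x)^m. Then f(x) = s(x)^m + L(x) is a permutation polynomial of F_{q^2}, i.e., x ↦ s(x)^m + L(x) is a bijection of F_{q^2}. -/
import Mathlib


/-- Let `δ^{q+1} = 1`, `s(x) = x^q + δx`, `m ≥ 1`, and let
`L(x) = αx^q + βx` be a rank 2 linearized polynomial (`β^{q+1} ≠ α^{q+1}`) mapping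
`ker s` into the one-dimensional `F_q`-subspace containing the image of `x ↦ s(x)^m`
(the `F_q`-span of `s(v)^m` for any `v ∉ ker s`). Then `f(x) = s(x)^m + L(x)` is a
bijection of `F_{q^2}`. -/
theorem stmt_3 (q : ℕ) (hq : IsPrimePow q)
    (F : Type) [Field F] [Fintype F] (hF : Fintype.card F = q ^ 2)
    (δ : F) (hδ : δ ^ (q + 1) = 1) (m : ℕ) (hm : 1 ≤ m)
    (α β : F) (hrank2 : β ^ (q + 1) ≠ α ^ (q + 1))
    (hker : ∀ u v : F, u ^ q + δ * u = 0 → v ^ q + δ * v ≠ 0 →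
      ∃ c : F, c ^ q = c ∧ α * u ^ q + β * u = c * (v ^ q + δ * v) ^ m) :
    Function.Bijective
      (fun x : F => (x ^ q + δ * x) ^ m + (α * x ^ q + β * x)) := by
  classical
  have hq2 : 2 ≤ q := hq.two_le
  obtain ⟨p, n, hpp, hn, hpn⟩ := hq
  have hp' : p.Prime := Nat.prime_iff.mpr hpp
  -- characteristic p
  have hq0 : ((q : F)) ^ 2 = 0 := by
    rw [← Nat.cast_pow, ← hF]; exact FiniteField.cast_card_eq_zero F
  have hqF : (q : F) = 0 := (pow_eq_zero_iff (by norm_num : (2:ℕ) ≠ 0)).mp hq0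
  have hpF : (p : F) = 0 := by
    have h : ((p : F)) ^ n = 0 := by rw [← Nat.cast_pow, hpn]; exact hqF
    exact (pow_eq_zero_iff hn.ne').mp h
  haveI : CharP F (ringChar F) := ringChar.charP F
  have hchar : ringChar F = p := by
    have h1 : ringChar F ∣ p := (CharP.cast_eq_zero_iff F (ringChar F) p).mp hpF
    have h2 : (ringChar F).Prime := CharP.char_is_prime F (ringChar F)
    exact (Nat.prime_dvd_prime_iff_eq h2 hp').mp h1
  haveI : CharP F p := hchar ▸ ringChar.charP F
  haveI : Fact p.Prime := ⟨hp'⟩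
  -- Frobenius ring hom  φ x = x ^ q
  let φ : F →+* F := iterateFrobenius F p n
  have hφ : ∀ x : F, φ x = x ^ q := by
    intro x; rw [show φ x = x ^ p ^ n from iterateFrobenius_def p n x, hpn]
  have hpow2 : ∀ x : F, (x ^ q) ^ q = x := by
    intro x; rw [← pow_mul, ← sq, ← hF]; exact FiniteField.pow_card x
  have hδ0 : δ ≠ 0 := by
    intro h; rw [h] at hδ; simp [zero_pow] at hδ
  have hδq : δ ^ q * δ = 1 := by rw [← pow_succ]; exact hδ
  have hδq' : δ ^ q = δ⁻¹ := by
    field_simp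
    linear_combination hδq
  -- subtraction is respected by x ↦ x^q
  have hsub : ∀ a b : F, (a - b) ^ q = a ^ q - b ^ q := by
    intro a b
    have h := map_sub φ a b
    rw [hφ, hφ, hφ] at h
    exact h
  -- eigenvalue property of s
  have hsq : ∀ x : F, (x ^ q + δ * x) ^ q = δ⁻¹ * (x ^ q + δ * x) := by
    intro x
    have h1 := map_add φ (x ^ q) (δ * x)
    rw [map_mul] at h1
    rw [hφ (x ^ q + δ * x), hφ (x ^ q), hφ δ, hφ x, hpow2 x, hδq'] at h1
    rw [h1]
    field_simp
    ring
  -- L is injective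
  have hLinj : ∀ w : F, α * w ^ q + β * w = 0 → w = 0 := by
    intro w hw
    by_contra hw0
    have h1 : α * w ^ q = -(β * w) := by linear_combination hw
    have h2 : φ (α * w ^ q) = φ (-(β * w)) := by rw [h1]
    rw [map_mul, map_neg, map_mul, hφ α, hφ (w ^ q), hφ β, hφ w, hpow2 w] at h2
    have h3 : (α * w ^ q) * (α ^ q * w) = (-(β * w)) * (-(β ^ q * w ^ q)) := by
      rw [h1, h2]
    have h4 : α ^ (q+1) * w ^ (q+1) = β ^ (q+1) * w ^ (q+1) := by
      rw [pow_succ α, pow_succ β, pow_succ w]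
      linear_combination h3
    have hwq : w ^ (q+1) ≠ 0 := pow_ne_zero _ hw0
    exact hrank2 (mul_right_cancel₀ hwq h4).symm
  -- generator of Fˣ
  obtain ⟨g, hg⟩ := IsCyclic.exists_monoid_generator (α := Fˣ)
  have horder : orderOf g = q ^ 2 - 1 := by
    have h1 : ∀ x : Fˣ, x ∈ Subgroup.zpowers g := by
      intro x
      obtain ⟨k, hk⟩ := hg x
      replace hk : g ^ k = x := hk
      refine Subgroup.mem_zpowers_iff.mpr ⟨(k : ℤ), ?_⟩
      rw [zpow_natCast]
      exact hk
    rw [orderOf_eq_card_of_forall_mem_zpowers h1, Nat.card_eq_fintype_card,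
      Fintype.card_units, hF]
  have hfact : q ^ 2 - 1 = (q - 1) * (q + 1) := by
    have h1 : 1 ≤ q := by omega
    have h2 : 1 ≤ q ^ 2 := Nat.one_le_pow _ _ (by omega)
    zify [h1, h2]
    ring
  -- (-δ)^(q+1) = 1
  have hε : (-δ) ^ (q + 1) = 1 := by
    rcases Nat.even_or_odd q with he | ho
    · have hp2 : p = 2 := by
        have h2d : 2 ∣ p ^ n := hpn ▸ he.two_dvd
        exact ((Nat.prime_dvd_prime_iff_eq Nat.prime_two hp').mp
          (Nat.Prime.dvd_of_dvd_pow Nat.prime_two h2d)).symm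
      rw [hp2] at hpF
      have h2F : (2 : F) = 0 := by exact_mod_cast hpF
      have hneg : (-δ) = δ := by linear_combination (-δ) * h2F
      rw [hneg]; exact hδ
    · have hev : Even (q + 1) := Odd.add_one ho
      rw [hev.neg_pow]; exact hδ
  -- a nonzero kernel element u0
  obtain ⟨u0, hu00, hu0⟩ : ∃ u0 : F, u0 ≠ 0 ∧ u0 ^ q + δ * u0 = 0 := by
    have hεu : (-δ) ≠ 0 := neg_ne_zero.mpr hδ0
    obtain ⟨k, hk⟩ := hg (Units.mk0 (-δ) hεu)
    replace hk : g ^ k = Units.mk0 (-δ) hεu := hk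
    have hgk : g ^ (k * (q + 1)) = 1 := by
      apply Units.ext
      rw [pow_mul, hk]
      rw [Units.val_pow_eq_pow_val, Units.val_mk0, Units.val_one, hε]
    have hdvd : orderOf g ∣ k * (q + 1) := orderOf_dvd_of_pow_eq_one hgk
    rw [horder, hfact] at hdvd
    have hdvd2 : (q - 1) ∣ k :=
      (Nat.mul_dvd_mul_iff_right (show 0 < q + 1 by omega)).mp hdvd
    obtain ⟨j, hj⟩ := hdvd2
    refine ⟨((g ^ j : Fˣ) : F), Units.ne_zero _, ?_⟩
    have h1 : ((g ^ j : Fˣ) : F) ^ (q - 1) = -δ := by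
      rw [← Units.val_pow_eq_pow_val, ← pow_mul, show j * (q - 1) = k by rw [hj, Nat.mul_comm],
        hk, Units.val_mk0]
    have h2 : ((g ^ j : Fˣ) : F) ^ q = ((g ^ j : Fˣ) : F) ^ (q - 1) * ((g ^ j : Fˣ) : F) := by
      rw [← pow_succ]
      congr 1
      omega
    rw [h2, h1]
    ring
  -- an element outside the kernel
  obtain ⟨v, hv⟩ : ∃ v : F, v ^ q + δ * v ≠ 0 := by
    by_contra hno
    push_neg at hno
    have h1 : δ = -1 := by
      have := hno 1
      rw [one_pow, mul_one] at this
      linear_combination this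
    have h2 := hno ((g : F))
    rw [h1] at h2
    have h3 : ((g : F)) ^ q = (g : F) := by linear_combination h2
    have hg1 : g ^ q = g := by
      apply Units.ext
      rw [Units.val_pow_eq_pow_val]
      exact h3
    have hgq1 : g ^ (q - 1) = 1 := by
      have hqs : q - 1 + 1 = q := by omega
      have h4 : g ^ (q - 1) * g = g := by
        rw [← pow_succ, hqs, hg1]
      exact mul_right_cancel (by rw [h4, one_mul])
    have hord := orderOf_dvd_of_pow_eq_one hgq1
    rw [horder] at hord
    have hle : q ^ 2 - 1 ≤ q - 1 := Nat.le_of_dvd (by omega) hord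
    have hqlt : q < q ^ 2 := by nlinarith [hq2, sq q]
    obtain ⟨a, ha⟩ : ∃ a, a = q ^ 2 := ⟨_, rfl⟩
    rw [← ha] at hqlt hle
    omega
  -- main injectivity argument
  have htfix : ∀ w : F, ((w ^ q + δ * w) / (v ^ q + δ * v)) ^ q
      = (w ^ q + δ * w) / (v ^ q + δ * v) := by
    intro w
    rw [div_pow, hsq w, hsq v, mul_div_mul_left _ _ (inv_ne_zero hδ0)]
  have hinj : Function.Injective
      (fun x : F => (x ^ q + δ * x) ^ m + (α * x ^ q + β * x)) := by
    intro x y hxy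
    simp only at hxy
    have htxq := htfix x
    have htyq := htfix y
    set tx := (x ^ q + δ * x) / (v ^ q + δ * v) with htx
    set ty := (y ^ q + δ * y) / (v ^ q + δ * v) with hty
    have hx' : x ^ q + δ * x = tx * (v ^ q + δ * v) := by
      rw [htx, div_mul_cancel₀ _ hv]
    have hy' : y ^ q + δ * y = ty * (v ^ q + δ * v) := by
      rw [hty, div_mul_cancel₀ _ hv]
    set c := ty ^ m - tx ^ m with hc
    have hcfix : c ^ q = c := by
      rw [← hφ c, hc, map_sub, map_pow, map_pow, hφ tx, hφ ty, htxq, htyq]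
    have hLz : α * (x - y) ^ q + β * (x - y) = c * (v ^ q + δ * v) ^ m := by
      rw [hsub]
      rw [hx', hy'] at hxy
      rw [mul_pow, mul_pow] at hxy
      rw [hc]
      linear_combination hxy
    obtain ⟨c0, hc0fix, hc0⟩ := hker u0 v hu0 hv
    have hc00 : c0 ≠ 0 := by
      intro h
      rw [h, zero_mul] at hc0
      exact hu00 (hLinj u0 hc0)
    set d := c / c0 with hd
    have hdfix : d ^ q = d := by
      rw [hd, div_pow, hcfix, hc0fix]
    have hdc : d * c0 = c := by rw [hd, div_mul_cancel₀ _ hc00]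
    have hu : (d * u0) ^ q + δ * (d * u0) = 0 := by
      rw [mul_pow, hdfix]
      linear_combination d * hu0
    have hLu : α * (d * u0) ^ q + β * (d * u0) = c * (v ^ q + δ * v) ^ m := by
      rw [mul_pow, hdfix]
      linear_combination d * hc0 + ((v ^ q + δ * v) ^ m) * hdc
    have hzu : x - y = d * u0 := by
      have hdiff : α * ((x - y) - d * u0) ^ q + β * ((x - y) - d * u0) = 0 := by
        rw [hsub]
        linear_combination hLz - hLu
      exact sub_eq_zero.mp (hLinj _ hdiff)
    have hsz : (x - y) ^ q + δ * (x - y) = 0 := by rw [hzu]; exact hu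
    rw [hsub] at hsz
    have hsxy : x ^ q + δ * x = y ^ q + δ * y := by linear_combination hsz
    rw [hsxy] at hxy
    have hLxy : α * (x - y) ^ q + β * (x - y) = 0 := by
      rw [hsub]
      linear_combination hxy
    exact sub_eq_zero.mp (hLinj _ hLxy)
  exact Finite.injective_iff_bijective.mp hinj
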